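/- Let A and B be complex r×r matrices. Then Re Tr(AB) ≤ ∑_{k=1}^r σ_k(A) σ_k(B), where σ_k denotes the k-th largest singular value. -/

import Mathlib

open Finset

private lemma filter_le_range (r s : ℕ) :
    (range r).filter (fun k => s ≤ k) = Ico s r := by
  ext k; simp only [mem_filter, mem_range, mem_Ico]; omega

private lemma telescope (a : ℕ → ℝ) (r i : ℕ) (hz : a r = 0) (hir : i ≤ r) :
    ∑ s ∈ Ico i r, (a s - a (s+1)) = a i := by
  rw [Finset.sum_Ico_eq_sum_range]
  have h : ∑ k ∈ range (r-i), (a (i+k) - a (i+(k+1))) = a i - a (i + (r-i)) :=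
    Finset.sum_range_sub' (fun k => a (i+k)) (r-i)
  simp only [← Nat.add_assoc] at h
  rw [h, show i + (r - i) = r by omega, hz, sub_zero]

private lemma sum_comm4 {M : Type*} [AddCommMonoid M] (A B C D : Finset ℕ)
    (f : ℕ → ℕ → ℕ → ℕ → M) :
    ∑ i ∈ A, ∑ j ∈ B, ∑ s ∈ C, ∑ t ∈ D, f i j s t
      = ∑ s ∈ C, ∑ t ∈ D, ∑ i ∈ A, ∑ j ∈ B, f i j s t := by
  rw [show (∑ i ∈ A, ∑ j ∈ B, ∑ s ∈ C, ∑ t ∈ D, f i j s t)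
      = ∑ i ∈ A, ∑ s ∈ C, ∑ j ∈ B, ∑ t ∈ D, f i j s t from
    Finset.sum_congr rfl fun i _ => Finset.sum_comm]
  rw [Finset.sum_comm]
  refine Finset.sum_congr rfl fun s _ => ?_
  rw [show (∑ i ∈ A, ∑ j ∈ B, ∑ t ∈ D, f i j s t)
      = ∑ i ∈ A, ∑ t ∈ D, ∑ j ∈ B, f i j s t from
    Finset.sum_congr rfl fun i _ => Finset.sum_comm]
  exact Finset.sum_comm

private lemma L_nat (r : ℕ) (a b : ℕ → ℝ) (T : ℕ → ℕ → ℝ)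
    (ha : ∀ n, a (n+1) ≤ a n) (ha0 : ∀ n, 0 ≤ a n) (haz : a r = 0)
    (hb : ∀ n, b (n+1) ≤ b n) (hb0 : ∀ n, 0 ≤ b n) (hbz : b r = 0)
    (hT0 : ∀ i j, 0 ≤ T i j)
    (hTr : ∀ i, ∑ j ∈ range r, T i j ≤ 1) (hTc : ∀ j, ∑ i ∈ range r, T i j ≤ 1) :
    ∑ i ∈ range r, ∑ j ∈ range r, a i * b j * T i j ≤ ∑ k ∈ range r, a k * b k := by
  set α : ℕ → ℝ := fun n => a n - a (n+1) with hα
  set β : ℕ → ℝ := fun n => b n - b (n+1) with hβ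
  have hα0 : ∀ n, 0 ≤ α n := fun n => sub_nonneg.2 (ha n)
  have hβ0 : ∀ n, 0 ≤ β n := fun n => sub_nonneg.2 (hb n)
  have hai : ∀ i ∈ range r, a i = ∑ s ∈ range r, (if i ≤ s then α s else 0) := fun i hi => by
    rw [← Finset.sum_filter, filter_le_range, telescope a r i haz (le_of_lt (mem_range.1 hi))]
  have hbi : ∀ i ∈ range r, b i = ∑ s ∈ range r, (if i ≤ s then β s else 0) := fun i hi => by
    rw [← Finset.sum_filter, filter_le_range, telescope b r i hbz (le_of_lt (mem_range.1 hi))]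
  have lhs_eq : ∑ i ∈ range r, ∑ j ∈ range r, a i * b j * T i j
      = ∑ s ∈ range r, ∑ t ∈ range r, α s * β t *
          (∑ i ∈ range r, ∑ j ∈ range r, (if i ≤ s ∧ j ≤ t then T i j else 0)) := by
    rw [Finset.sum_congr rfl (fun i hi => Finset.sum_congr rfl (fun j hj => by
      rw [hai i hi, hbi j hj, Finset.sum_mul_sum, Finset.sum_mul, Finset.sum_congr rfl
        (fun s _ => Finset.sum_mul _ _ _)]))]
    rw [sum_comm4]
    refine Finset.sum_congr rfl fun s _ => Finset.sum_congr rfl fun t _ => ?_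
    rw [Finset.mul_sum]
    refine Finset.sum_congr rfl fun i _ => ?_
    rw [Finset.mul_sum]
    refine Finset.sum_congr rfl fun j _ => ?_
    by_cases h1 : i ≤ s <;> by_cases h2 : j ≤ t <;> simp [h1, h2] <;> ring
  have rhs_eq : ∑ k ∈ range r, a k * b k
      = ∑ s ∈ range r, ∑ t ∈ range r, α s * β t *
          (((range r).filter (fun k => k ≤ s ∧ k ≤ t)).card : ℝ) := by
    rw [Finset.sum_congr rfl (fun k hk => by
      rw [hai k hk, hbi k hk, Finset.sum_mul_sum])]
    rw [Finset.sum_comm]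
    refine Finset.sum_congr rfl fun s _ => ?_
    rw [Finset.sum_comm]
    refine Finset.sum_congr rfl fun t _ => ?_
    rw [Finset.card_filter, Nat.cast_sum, Finset.mul_sum]
    refine Finset.sum_congr rfl fun k _ => ?_
    by_cases h1 : k ≤ s <;> by_cases h2 : k ≤ t <;> simp [h1, h2]
  rw [lhs_eq, rhs_eq]
  refine Finset.sum_le_sum fun s hs => Finset.sum_le_sum fun t ht => ?_
  refine mul_le_mul_of_nonneg_left ?_ (mul_nonneg (hα0 s) (hβ0 t))
  -- W s t ≤ card
  have hcard : (((range r).filter (fun k => k ≤ s ∧ k ≤ t)).card : ℝ)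
      = (min (min (s+1) (t+1)) r : ℕ) := by
    congr 1
    rw [show (range r).filter (fun k => k ≤ s ∧ k ≤ t) = range (min (min (s+1) (t+1)) r) by
      ext k; simp only [mem_filter, mem_range]; omega, Finset.card_range]
  rw [hcard]
  have hs' := mem_range.1 hs
  have ht' := mem_range.1 ht
  have hmin : min (min (s+1) (t+1)) r = min (s+1) (t+1) := by omega
  rw [hmin]
  rcases le_total (s+1) (t+1) with h | h
  · rw [min_eq_left h]
    calc ∑ i ∈ range r, ∑ j ∈ range r, (if i ≤ s ∧ j ≤ t then T i j else 0)
        ≤ ∑ i ∈ range r, (if i ≤ s then 1 else 0) := by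
          refine Finset.sum_le_sum fun i _ => ?_
          by_cases h1 : i ≤ s
          · simp only [h1, true_and, if_true]
            calc ∑ j ∈ range r, (if j ≤ t then T i j else 0)
                ≤ ∑ j ∈ range r, T i j :=
                  Finset.sum_le_sum fun j _ => by
                    by_cases h2 : j ≤ t <;> simp [h2, hT0 i j]
              _ ≤ 1 := hTr i
          · simp [h1]
      _ = (((range r).filter (fun i => i ≤ s)).card : ℝ) := by
          rw [Finset.card_filter, Nat.cast_sum]
          exact Finset.sum_congr rfl fun x _ => by by_cases h1 : x ≤ s <;> simp [h1]
      _ ≤ ((s+1 : ℕ) : ℝ) := by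
          have : ((range r).filter (fun i => i ≤ s)).card ≤ s+1 := by
            have := Finset.card_filter_le (range (s+1)) (fun i => True)
            calc ((range r).filter (fun i => i ≤ s)).card
                ≤ (range (s+1)).card := Finset.card_le_card (by
                  intro k hk; simp at hk ⊢; omega)
              _ = s+1 := Finset.card_range _
          exact_mod_cast this
  · rw [min_eq_right h]
    calc ∑ i ∈ range r, ∑ j ∈ range r, (if i ≤ s ∧ j ≤ t then T i j else 0)
        = ∑ j ∈ range r, ∑ i ∈ range r, (if i ≤ s ∧ j ≤ t then T i j else 0) :=
          Finset.sum_comm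
      _ ≤ ∑ j ∈ range r, (if j ≤ t then 1 else 0) := by
          refine Finset.sum_le_sum fun j _ => ?_
          by_cases h2 : j ≤ t
          · simp only [h2, and_true, if_true]
            calc ∑ i ∈ range r, (if i ≤ s then T i j else 0)
                ≤ ∑ i ∈ range r, T i j :=
                  Finset.sum_le_sum fun i _ => by
                    by_cases h1 : i ≤ s <;> simp [h1, hT0 i j]
              _ ≤ 1 := hTc j
          · simp [h2]
      _ = (((range r).filter (fun j => j ≤ t)).card : ℝ) := by
          rw [Finset.card_filter, Nat.cast_sum]
          exact Finset.sum_congr rfl fun x _ => by by_cases h2 : x ≤ t <;> simp [h2]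
      _ ≤ ((t+1 : ℕ) : ℝ) := by
          have : ((range r).filter (fun j => j ≤ t)).card ≤ t+1 := by
            calc ((range r).filter (fun j => j ≤ t)).card
                ≤ (range (t+1)).card := Finset.card_le_card (by
                  intro k hk; simp at hk ⊢; omega)
              _ = t+1 := Finset.card_range _
          exact_mod_cast this

private lemma L_fin {r : ℕ} (a b : Fin r → ℝ) (T : Fin r → Fin r → ℝ)
    (ha : Antitone a) (ha0 : ∀ i, 0 ≤ a i)
    (hb : Antitone b) (hb0 : ∀ i, 0 ≤ b i)
    (hT0 : ∀ i j, 0 ≤ T i j) (hTr : ∀ i, ∑ j, T i j ≤ 1) (hTc : ∀ j, ∑ i, T i j ≤ 1) :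
    ∑ i, ∑ j, a i * b j * T i j ≤ ∑ k, a k * b k := by
  set a' : ℕ → ℝ := fun n => if h : n < r then a ⟨n, h⟩ else 0 with ha'
  set b' : ℕ → ℝ := fun n => if h : n < r then b ⟨n, h⟩ else 0 with hb'
  set T' : ℕ → ℕ → ℝ := fun m n =>
    if h : m < r ∧ n < r then T ⟨m, h.1⟩ ⟨n, h.2⟩ else 0 with hT'
  have haa : ∀ i : Fin r, a' i = a i := fun i => dif_pos i.isLt
  have hbb : ∀ i : Fin r, b' i = b i := fun i => dif_pos i.isLt
  have hTT : ∀ i j : Fin r, T' i j = T i j := fun i j => by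
    simp only [hT', Fin.is_lt, and_self, dif_pos, Fin.eta]
  have step : ∀ (c : Fin r → ℝ) (c' : ℕ → ℝ), (∀ n, c' n = if h : n < r then c ⟨n,h⟩ else 0) →
      (Antitone c) → (∀ i, 0 ≤ c i) → (∀ n, c' (n+1) ≤ c' n) ∧ (∀ n, 0 ≤ c' n) ∧ c' r = 0 := by
    intro c c' hc hmono h0
    refine ⟨fun n => ?_, fun n => ?_, by simp [hc]⟩
    · rw [hc, hc]
      by_cases h1 : n + 1 < r
      · have h2 : n < r := by omega
        rw [dif_pos h1, dif_pos h2]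
        exact hmono (by simp [Fin.le_def])
      · rw [dif_neg h1]
        by_cases h2 : n < r
        · rw [dif_pos h2]; exact h0 _
        · rw [dif_neg h2]
    · rw [hc]; by_cases h1 : n < r
      · rw [dif_pos h1]; exact h0 _
      · rw [dif_neg h1]
  obtain ⟨ha1, ha2, ha3⟩ := step a a' (fun n => rfl) ha ha0
  obtain ⟨hb1, hb2, hb3⟩ := step b b' (fun n => rfl) hb hb0
  have key := L_nat r a' b' T' ha1 ha2 ha3 hb1 hb2 hb3
    (fun i j => by
      simp only [hT']; by_cases h : i < r ∧ j < r
      · rw [dif_pos h]; exact hT0 _ _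
      · rw [dif_neg h])
    (fun i => by
      by_cases h : i < r
      · calc ∑ j ∈ range r, T' i j = ∑ j : Fin r, T' i j :=
              (Fin.sum_univ_eq_sum_range (fun j => T' i j) r).symm
          _ = ∑ j : Fin r, T (⟨i, h⟩ : Fin r) j := by
              refine Finset.sum_congr rfl fun j _ => ?_
              simp only [hT', j.isLt, h, and_self, dif_pos]
          _ ≤ 1 := hTr _
      · have : ∀ j ∈ range r, T' i j = 0 := fun j _ => by
          simp only [hT']; rw [dif_neg (by omega)]
        rw [Finset.sum_congr rfl this]; simp)
    (fun j => by
      by_cases h : j < r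
      · calc ∑ i ∈ range r, T' i j = ∑ i : Fin r, T' i j :=
              (Fin.sum_univ_eq_sum_range (fun i => T' i j) r).symm
          _ = ∑ i : Fin r, T i (⟨j, h⟩ : Fin r) := by
              refine Finset.sum_congr rfl fun i _ => ?_
              simp only [hT', i.isLt, h, and_self, dif_pos]
          _ ≤ 1 := hTc _
      · have : ∀ i ∈ range r, T' i j = 0 := fun i _ => by
          simp only [hT']; rw [dif_neg (by omega)]
        rw [Finset.sum_congr rfl this]; simp)
  calc ∑ i, ∑ j, a i * b j * T i j
      = ∑ i ∈ range r, ∑ j ∈ range r, a' i * b' j * T' i j := by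
        rw [← Fin.sum_univ_eq_sum_range (fun i => ∑ j ∈ range r, a' i * b' j * T' i j) r]
        refine Finset.sum_congr rfl fun i _ => ?_
        rw [← Fin.sum_univ_eq_sum_range (fun j => a' i * b' j * T' i j) r]
        exact Finset.sum_congr rfl fun j _ => by rw [haa, hbb, hTT]
    _ ≤ ∑ k ∈ range r, a' k * b' k := key
    _ = ∑ k, a k * b k := by
        rw [← Fin.sum_univ_eq_sum_range (fun k => a' k * b' k) r]
        exact Finset.sum_congr rfl fun k _ => by rw [haa, hbb]

open Matrix in
private lemma svd_exists {r : ℕ} (M : Matrix (Fin r) (Fin r) ℂ) :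
    ∃ U ∈ Matrix.unitaryGroup (Fin r) ℂ,
      M = U * Matrix.diagonal (fun i =>
            ((Real.sqrt ((Matrix.isHermitian_conjTranspose_mul_self M).eigenvalues i) : ℝ) : ℂ))
          * star ((Matrix.IsHermitian.eigenvectorUnitary
              (Matrix.isHermitian_conjTranspose_mul_self M) : Matrix (Fin r) (Fin r) ℂ)) := by
  classical
  set hM := Matrix.isHermitian_conjTranspose_mul_self M with hhM
  set V : Matrix (Fin r) (Fin r) ℂ := (hM.eigenvectorUnitary : Matrix (Fin r) (Fin r) ℂ) with hV
  set lam : Fin r → ℝ := hM.eigenvalues with hlam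
  set σ : Fin r → ℝ := fun i => Real.sqrt (lam i) with hσ
  have hl0 : ∀ i, 0 ≤ lam i := fun i => M.eigenvalues_conjTranspose_mul_self_nonneg i
  set C : Matrix (Fin r) (Fin r) ℂ := M * V with hC
  have hCC : Cᴴ * C = Matrix.diagonal (fun i => (lam i : ℂ)) := by
    have h1 : star V * (Mᴴ * M) * V = Matrix.diagonal (RCLike.ofReal ∘ hM.eigenvalues) := by
      simpa only [Unitary.conjStarAlgAut_apply, Unitary.coe_star, star_star] using
        hM.conjStarAlgAut_star_eigenvectorUnitary
    calc Cᴴ * C = star V * (Mᴴ * M) * V := by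
          rw [hC, conjTranspose_mul, Matrix.star_eq_conjTranspose]
          simp only [Matrix.mul_assoc]
      _ = Matrix.diagonal (RCLike.ofReal ∘ hM.eigenvalues) := h1
      _ = Matrix.diagonal (fun i => (lam i : ℂ)) := rfl
  have hentry : ∀ j k, ∑ i, (starRingEnd ℂ) (C i j) * C i k
      = if j = k then (lam j : ℂ) else 0 := by
    intro j k
    have := congrFun (congrFun hCC j) k
    simpa [Matrix.mul_apply, Matrix.conjTranspose_apply, Matrix.diagonal_apply] using this
  have hczero : ∀ j, lam j = 0 → ∀ i, C i j = 0 := by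
    intro j hj i
    have h0 := hentry j j
    rw [if_pos rfl, hj] at h0
    push_cast at h0
    have hsum : ∑ i, Complex.normSq (C i j) = 0 := by
      have : ((∑ i, Complex.normSq (C i j) : ℝ) : ℂ) = 0 := by
        push_cast
        rw [← h0]
        exact Finset.sum_congr rfl fun i _ => by
          rw [mul_comm, Complex.mul_conj]
      exact_mod_cast this
    have := (Finset.sum_eq_zero_iff_of_nonneg
      (fun i _ => Complex.normSq_nonneg (C i j))).1 hsum i (Finset.mem_univ i)
    exact Complex.normSq_eq_zero.1 this
  -- the candidate left singular vectors
  set u : Fin r → EuclideanSpace ℂ (Fin r) := fun j => WithLp.toLp 2 (fun i => ((σ j : ℝ) : ℂ)⁻¹ * C i j) with hu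
  set s : Set (Fin r) := {j | lam j ≠ 0} with hs
  have hσpos : ∀ j ∈ s, 0 < σ j := fun j hj =>
    Real.sqrt_pos.2 (lt_of_le_of_ne (hl0 j) (Ne.symm hj))
  have horth : Orthonormal ℂ (s.restrict u) := by
    rw [orthonormal_iff_ite]
    intro j k
    have : (inner ℂ (s.restrict u j) (s.restrict u k) : ℂ)
        = ((σ j.1 : ℝ) : ℂ)⁻¹ * ((σ k.1 : ℝ) : ℂ)⁻¹ * (if j.1 = k.1 then (lam j.1 : ℂ) else 0) := by
      rw [PiLp.inner_apply, ← hentry]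
      rw [Finset.mul_sum]
      refine Finset.sum_congr rfl fun i _ => ?_
      simp only [Set.restrict_apply, Set.restrict, hu, RCLike.inner_apply, WithLp.ofLp_toLp]
      rw [_root_.map_mul]
      have : (starRingEnd ℂ) (((σ j.1 : ℝ) : ℂ)⁻¹) = ((σ j.1 : ℝ) : ℂ)⁻¹ := by
        rw [map_inv₀, Complex.conj_ofReal]
      rw [this]; ring
    rw [this]
    by_cases hjk : j = k
    · subst hjk
      rw [if_pos rfl, if_pos rfl]
      have hσj := hσpos j.1 j.2
      have hlj : lam j.1 ≠ 0 := j.2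
      have hsq : (σ j.1) * (σ j.1) = lam j.1 := Real.mul_self_sqrt (hl0 j.1)
      have hσne : ((σ j.1 : ℝ) : ℂ) ≠ 0 := by
        exact_mod_cast (ne_of_gt hσj)
      field_simp
      rw [← hsq]; push_cast; ring
    · have : j.1 ≠ k.1 := fun h => hjk (Subtype.ext h)
      rw [if_neg this, if_neg hjk, mul_zero]
  obtain ⟨b, hb⟩ := horth.exists_orthonormalBasis_extension_of_card_eq
    (by rw [finrank_euclideanSpace_fin, Fintype.card_fin])
  set U : Matrix (Fin r) (Fin r) ℂ :=
    (EuclideanSpace.basisFun (Fin r) ℂ).toBasis.toMatrix b.toBasis with hU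
  have hUmem : U ∈ Matrix.unitaryGroup (Fin r) ℂ :=
    (EuclideanSpace.basisFun (Fin r) ℂ).toMatrix_orthonormalBasis_mem_unitary b
  have hUapp : ∀ i j, U i j = b j i := fun i j => rfl
  have hCU : C = U * Matrix.diagonal (fun i => ((σ i : ℝ) : ℂ)) := by
    ext i j
    rw [Matrix.mul_diagonal]
    by_cases hj : lam j ≠ 0
    · have hbj : b j = u j := hb j hj
      rw [hUapp, hbj]
      show C i j = ((σ j : ℝ) : ℂ)⁻¹ * C i j * ((σ j : ℝ) : ℂ)
      have hσne : ((σ j : ℝ) : ℂ) ≠ 0 := by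
        exact_mod_cast (ne_of_gt (hσpos j hj))
      field_simp
    · push_neg at hj
      rw [hczero j hj i]
      have : σ j = 0 := by rw [hσ]; simp [hj]
      rw [this]
      simp
  refine ⟨U, hUmem, ?_⟩
  have hMC : M = C * star V := by
    rw [hC, Matrix.mul_assoc, Unitary.mul_star_self_of_mem hM.eigenvectorUnitary.2, Matrix.mul_one]
  rw [← hCU]
  exact hMC

open Matrix in
private lemma unitary_row_sum {r : ℕ} {W : Matrix (Fin r) (Fin r) ℂ}
    (hW : W ∈ Matrix.unitaryGroup (Fin r) ℂ) (i : Fin r) :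
    ∑ j, Complex.normSq (W i j) = 1 := by
  have h : W * star W = 1 := Matrix.mem_unitaryGroup_iff.mp hW
  have h2 := congrFun (congrFun h i) i
  have h3 : ∑ j, W i j * (starRingEnd ℂ) (W i j) = 1 := by
    simpa [Matrix.mul_apply, Matrix.star_eq_conjTranspose, Matrix.conjTranspose_apply,
      Matrix.one_apply] using h2
  have : ((∑ j, Complex.normSq (W i j) : ℝ) : ℂ) = 1 := by
    push_cast
    rw [← h3]
    exact Finset.sum_congr rfl fun j _ => (Complex.mul_conj (W i j)).symm
  exact_mod_cast this

open Matrix in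
private lemma unitary_col_sum {r : ℕ} {W : Matrix (Fin r) (Fin r) ℂ}
    (hW : W ∈ Matrix.unitaryGroup (Fin r) ℂ) (j : Fin r) :
    ∑ i, Complex.normSq (W i j) = 1 := by
  have hW' : star W ∈ Matrix.unitaryGroup (Fin r) ℂ := Unitary.star_mem hW
  have := unitary_row_sum hW' j
  calc ∑ i, Complex.normSq (W i j)
      = ∑ i, Complex.normSq ((star W) j i) := by
        refine Finset.sum_congr rfl fun i _ => ?_
        rw [Matrix.star_apply, show star (W i j) = (starRingEnd ℂ) (W i j) from rfl,
          Complex.normSq_conj]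
    _ = 1 := this

/-- The singular values of a square complex matrix, arranged in decreasing order:
the square roots of the eigenvalues of `Mᴴ * M`, sorted decreasingly. -/
noncomputable def singularValuesDesc {r : ℕ} (M : Matrix (Fin r) (Fin r) ℂ) : Fin r → ℝ :=
  (fun k => Real.sqrt ((Matrix.isHermitian_conjTranspose_mul_self M).eigenvalues k)) ∘
    Tuple.sort fun k =>
      -Real.sqrt ((Matrix.isHermitian_conjTranspose_mul_self M).eigenvalues k)

private lemma main_aux {r : ℕ} (A B : Matrix (Fin r) (Fin r) ℂ)
    (pA pB : Equiv.Perm (Fin r))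
    (hmA : Monotone ((fun k =>
      -Real.sqrt ((Matrix.isHermitian_conjTranspose_mul_self A).eigenvalues k)) ∘ pA))
    (hmB : Monotone ((fun k =>
      -Real.sqrt ((Matrix.isHermitian_conjTranspose_mul_self B).eigenvalues k)) ∘ pB)) :
    ((A * B).trace).re ≤ ∑ k,
      Real.sqrt ((Matrix.isHermitian_conjTranspose_mul_self A).eigenvalues (pA k)) *
      Real.sqrt ((Matrix.isHermitian_conjTranspose_mul_self B).eigenvalues (pB k)) := by
  classical
  obtain ⟨UA, hUA, hAeq⟩ := svd_exists A
  obtain ⟨UB, hUB, hBeq⟩ := svd_exists B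
  set σA : Fin r → ℝ := fun i =>
    Real.sqrt ((Matrix.isHermitian_conjTranspose_mul_self A).eigenvalues i) with hσA
  set σB : Fin r → ℝ := fun i =>
    Real.sqrt ((Matrix.isHermitian_conjTranspose_mul_self B).eigenvalues i) with hσB
  set VA : Matrix (Fin r) (Fin r) ℂ :=
    ((Matrix.isHermitian_conjTranspose_mul_self A).eigenvectorUnitary : Matrix (Fin r) (Fin r) ℂ)
    with hVA
  set VB : Matrix (Fin r) (Fin r) ℂ :=
    ((Matrix.isHermitian_conjTranspose_mul_self B).eigenvectorUnitary : Matrix (Fin r) (Fin r) ℂ)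
    with hVB
  set DA : Matrix (Fin r) (Fin r) ℂ := Matrix.diagonal (fun i => ((σA i : ℝ) : ℂ)) with hDA
  set DB : Matrix (Fin r) (Fin r) ℂ := Matrix.diagonal (fun i => ((σB i : ℝ) : ℂ)) with hDB
  set P : Matrix (Fin r) (Fin r) ℂ := star VA * UB with hP
  set Q : Matrix (Fin r) (Fin r) ℂ := star VB * UA with hQ
  have hPmem : P ∈ Matrix.unitaryGroup (Fin r) ℂ :=
    mul_mem (Unitary.star_mem
      (Matrix.isHermitian_conjTranspose_mul_self A).eigenvectorUnitary.2) hUB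
  have hQmem : Q ∈ Matrix.unitaryGroup (Fin r) ℂ :=
    mul_mem (Unitary.star_mem
      (Matrix.isHermitian_conjTranspose_mul_self B).eigenvectorUnitary.2) hUA
  -- trace rewrite
  have htr : (A * B).trace = (DA * P * DB * Q).trace := by
    calc (A * B).trace = (UA * (DA * P * DB * star VB)).trace := by
          rw [hAeq, hBeq]
          congr 1
          simp only [hP, Matrix.mul_assoc]
      _ = ((DA * P * DB * star VB) * UA).trace := Matrix.trace_mul_comm _ _
      _ = (DA * P * DB * Q).trace := by
          congr 1
          simp only [hQ, Matrix.mul_assoc]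
  have hexp : (DA * P * DB * Q).trace
      = ∑ i, ∑ j, ((σA i : ℝ) : ℂ) * P i j * ((σB j : ℝ) : ℂ) * Q j i := by
    rw [Matrix.trace]
    refine Finset.sum_congr rfl fun i _ => ?_
    rw [Matrix.diag]
    rw [Matrix.mul_apply]
    refine Finset.sum_congr rfl fun j _ => ?_
    rw [hDA, hDB, Matrix.mul_diagonal, Matrix.diagonal_mul]
  -- real part bound
  set S : Fin r → Fin r → ℝ := fun i j =>
    (Complex.normSq (P i j) + Complex.normSq (Q j i)) / 2 with hS
  have hre : ((A * B).trace).re ≤ ∑ i, ∑ j, σA i * σB j * S i j := by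
    rw [htr, hexp, Complex.re_sum]
    refine Finset.sum_le_sum fun i _ => ?_
    rw [Complex.re_sum]
    refine Finset.sum_le_sum fun j _ => ?_
    have hrw : ((σA i : ℝ) : ℂ) * P i j * ((σB j : ℝ) : ℂ) * Q j i
        = (((σA i * σB j : ℝ)) : ℂ) * (P i j * Q j i) := by push_cast; ring
    rw [hrw, Complex.re_ofReal_mul]
    have h1 : (P i j * Q j i).re ≤ S i j := by
      calc (P i j * Q j i).re ≤ ‖P i j * Q j i‖ := Complex.re_le_norm _
        _ = ‖P i j‖ * ‖Q j i‖ := norm_mul _ _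
        _ ≤ S i j := by
            simp only [hS]
            have e1 : Complex.normSq (P i j) = (‖P i j‖)^2 :=
              (Complex.sq_norm _).symm
            have e2 : Complex.normSq (Q j i) = (‖Q j i‖)^2 :=
              (Complex.sq_norm _).symm
            rw [e1, e2]
            nlinarith [sq_nonneg (‖P i j‖ - ‖Q j i‖),
              norm_nonneg (P i j), norm_nonneg (Q j i)]
    have h0 : 0 ≤ σA i * σB j := mul_nonneg (Real.sqrt_nonneg _) (Real.sqrt_nonneg _)
    exact mul_le_mul_of_nonneg_left h1 h0
  -- double stochasticity of S
  have hS0 : ∀ i j, 0 ≤ S i j := fun i j =>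
    div_nonneg (add_nonneg (Complex.normSq_nonneg _) (Complex.normSq_nonneg _)) (by norm_num)
  have hSr : ∀ i, ∑ j, S i j = 1 := fun i => by
    simp only [hS]
    rw [← Finset.sum_div, Finset.sum_add_distrib, unitary_row_sum hPmem i,
      unitary_col_sum hQmem i]
    norm_num
  have hSc : ∀ j, ∑ i, S i j = 1 := fun j => by
    simp only [hS]
    rw [← Finset.sum_div, Finset.sum_add_distrib, unitary_col_sum hPmem j,
      unitary_row_sum hQmem j]
    norm_num
  -- sorted values
  set a : Fin r → ℝ := fun k => σA (pA k) with ha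
  set b : Fin r → ℝ := fun k => σB (pB k) with hb
  have haanti : Antitone a := by
    intro k l hkl
    have := hmA hkl
    simpa [ha, hσA, Function.comp, neg_le_neg_iff] using this
  have hbanti : Antitone b := by
    intro k l hkl
    have := hmB hkl
    simpa [hb, hσB, Function.comp, neg_le_neg_iff] using this
  set T : Fin r → Fin r → ℝ := fun k l => S (pA k) (pB l) with hT
  have hreidx : ∑ i, ∑ j, σA i * σB j * S i j = ∑ k, ∑ l, a k * b l * T k l := by
    rw [← Equiv.sum_comp pA (fun i => ∑ j, σA i * σB j * S i j)]
    refine Finset.sum_congr rfl fun k _ => ?_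
    rw [← Equiv.sum_comp pB (fun j => σA (pA k) * σB j * S (pA k) j)]
  have final := L_fin a b T haanti (fun k => Real.sqrt_nonneg _)
    hbanti (fun k => Real.sqrt_nonneg _)
    (fun k l => hS0 _ _)
    (fun k => by
      simp only [hT]
      calc ∑ l, S (pA k) (pB l) = ∑ j, S (pA k) j := Equiv.sum_comp pB (fun j => S (pA k) j)
        _ ≤ 1 := le_of_eq (hSr _))
    (fun l => by
      simp only [hT]
      calc ∑ k, S (pA k) (pB l) = ∑ i, S i (pB l) := Equiv.sum_comp pA (fun i => S i (pB l))
        _ ≤ 1 := le_of_eq (hSc _))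
  calc ((A * B).trace).re ≤ ∑ i, ∑ j, σA i * σB j * S i j := hre
    _ = ∑ k, ∑ l, a k * b l * T k l := hreidx
    _ ≤ ∑ k, a k * b k := final
    _ = ∑ k, σA (pA k) * σB (pB k) := rfl

/-- von Neumann's trace inequality:
`Re Tr(AB) ≤ ∑ₖ σ_k(A) σ_k(B)` where `σ_k` are the decreasingly sorted singular values. -/
theorem stmt2 (r : ℕ) (A B : Matrix (Fin r) (Fin r) ℂ) :
    ((A * B).trace).re ≤ ∑ k, singularValuesDesc A k * singularValuesDesc B k := by
  have h := main_aux A B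
    (Tuple.sort fun k =>
      -Real.sqrt ((Matrix.isHermitian_conjTranspose_mul_self A).eigenvalues k))
    (Tuple.sort fun k =>
      -Real.sqrt ((Matrix.isHermitian_conjTranspose_mul_self B).eigenvalues k))
    (Tuple.monotone_sort _) (Tuple.monotone_sort _)
  exact h
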